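/- arXiv:1109.4070 — 5 statements merged into one kernel-verified Lean document; each statement's English description precedes it below -/
import Mathlib

section
/- Let p be a prime, n a positive integer, and k a positive integer. Let W be a module over R = 𝔽_p[G]. Suppose W contains an R-submodule V isomorphic to the free module R^k, and suppose there exists δ ∈ W with (σ-1)^{p^n-1}·δ = 0 and δ ∉ V. Then the set of R-submodules of W that are isomorphic to R^k has cardinality at least p^k. (Proposition 4.2.) -/
/-- The cyclic group `ℤ/pⁿℤ`, written multiplicatively. -/
abbrev Gpn (p n : ℕ) : Type := Multiplicative (ZMod (p ^ n))

/-- The group algebra `𝔽_p[ℤ/pⁿℤ]`. -/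
abbrev Rpn (p n : ℕ) : Type := MonoidAlgebra (ZMod p) (Gpn p n)

/-- The fixed generator `σ` of `ℤ/pⁿℤ`, viewed inside the group algebra. -/
noncomputable def sigmaPn (p n : ℕ) : Rpn p n :=
  MonoidAlgebra.of (ZMod p) (Gpn p n) (Multiplicative.ofAdd (1 : ZMod (p ^ n)))

set_option linter.unusedSectionVars false

noncomputable def mBasis (p m : ℕ) :
    Module.Basis (Multiplicative (ZMod m)) (ZMod p) (MonoidAlgebra (ZMod p) (Multiplicative (ZMod m))) :=
  ⟨MonoidAlgebra.coeffLinearEquiv (ZMod p)⟩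

lemma mBasis_apply (p m : ℕ) (g : Multiplicative (ZMod m)) :
    mBasis p m g = MonoidAlgebra.of (ZMod p) _ g := rfl

section aux
variable (p n : ℕ) [Fact p.Prime] [NeZero (p ^ n)]

lemma charP_Rpn : CharP (Rpn p n) p :=
  charP_of_injective_algebraMap' (ZMod p) p

lemma sigma_pow (m : ℕ) :
    (sigmaPn p n) ^ m = MonoidAlgebra.of (ZMod p) (Gpn p n)
      (Multiplicative.ofAdd (m : ZMod (p ^ n))) := by
  rw [sigmaPn, ← map_pow]
  congr 1
  rw [← ofAdd_nsmul]
  congr 1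
  simp [nsmul_eq_mul]

lemma t_pow_card : (sigmaPn p n - 1) ^ (p ^ n) = 0 := by
  haveI := charP_Rpn p n
  rw [sub_pow_char_pow, one_pow, sigma_pow, ZMod.natCast_self]
  simp [MonoidAlgebra.one_def]

lemma of_eq_sigma_pow (g : Gpn p n) :
    MonoidAlgebra.of (ZMod p) (Gpn p n) g = (sigmaPn p n) ^ (g.toAdd).val := by
  rw [sigma_pow]
  congr 1
  simp [ZMod.natCast_val, ZMod.cast_id]

lemma t_dvd_of_sub_one (g : Gpn p n) :
    (sigmaPn p n - 1) ∣ MonoidAlgebra.of (ZMod p) (Gpn p n) g - 1 := by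
  rw [of_eq_sigma_pow]
  simpa using sub_dvd_pow_sub_pow (sigmaPn p n) 1 (g.toAdd).val

lemma decomp (r : Rpn p n) :
    ∃ (l : ZMod p) (s : Rpn p n),
      r = algebraMap (ZMod p) (Rpn p n) l + (sigmaPn p n - 1) * s := by
  induction r using MonoidAlgebra.induction with
  | zero => exact ⟨0, 0, by simp⟩
  | single_add g c f _ _ ih =>
    obtain ⟨l, s, hs⟩ := ih
    obtain ⟨u, hu⟩ := t_dvd_of_sub_one p n g
    refine ⟨c + l, algebraMap (ZMod p) (Rpn p n) c * u + s, ?_⟩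
    have hsingle : (MonoidAlgebra.single g c : Rpn p n)
        = algebraMap (ZMod p) (Rpn p n) c * MonoidAlgebra.of (ZMod p) (Gpn p n) g := by
      simp [MonoidAlgebra.coe_algebraMap, MonoidAlgebra.of_apply,
        MonoidAlgebra.single_mul_single]
    have : MonoidAlgebra.of (ZMod p) (Gpn p n) g = 1 + (sigmaPn p n - 1) * u := by
      rw [← hu]; ring
    rw [hsingle, this, hs, map_add]
    ring

lemma t_pow_mem_span (j : ℕ) :
    (sigmaPn p n - 1) ^ j ∈
      Submodule.span (ZMod p) (Set.range fun i : Fin (p ^ n) => (sigmaPn p n - 1) ^ (i : ℕ)) := by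
  by_cases hj : j < p ^ n
  · exact Submodule.subset_span ⟨⟨j, hj⟩, rfl⟩
  · have : (sigmaPn p n - 1) ^ j = 0 := by
      rw [← Nat.sub_add_cancel (le_of_not_gt hj), pow_add, t_pow_card, mul_zero]
    rw [this]; exact Submodule.zero_mem _

lemma span_t_top :
    ⊤ ≤ Submodule.span (ZMod p) (Set.range fun i : Fin (p ^ n) => (sigmaPn p n - 1) ^ (i : ℕ)) := by
  intro x _
  set S := Submodule.span (ZMod p) (Set.range fun i : Fin (p ^ n) => (sigmaPn p n - 1) ^ (i : ℕ))
  have hof : ∀ g : Gpn p n, MonoidAlgebra.of (ZMod p) (Gpn p n) g ∈ S := by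
    intro g
    rw [of_eq_sigma_pow]
    set m := (g.toAdd).val
    have : (sigmaPn p n) ^ m = ((sigmaPn p n - 1) + 1) ^ m := by ring_nf
    rw [this, add_pow]
    refine Submodule.sum_mem _ fun i _ => ?_
    have hterm : (sigmaPn p n - 1) ^ i * 1 ^ (m - i) * (m.choose i : Rpn p n)
        = ((m.choose i : ZMod p)) • (sigmaPn p n - 1) ^ i := by
      rw [Algebra.smul_def, map_natCast]
      ring
    rw [hterm]
    exact Submodule.smul_mem _ _ (t_pow_mem_span p n i)
  induction x using MonoidAlgebra.induction with
  | zero => exact Submodule.zero_mem _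
  | single_add g c f _ _ ih =>
    have hsingle : (MonoidAlgebra.single g c : Rpn p n)
        = c • MonoidAlgebra.of (ZMod p) (Gpn p n) g := by
      simp [MonoidAlgebra.of_apply, MonoidAlgebra.smul_single']
    refine Submodule.add_mem _ ?_ (ih trivial)
    rw [hsingle]
    exact Submodule.smul_mem _ _ (hof g)

lemma card_finrank : Fintype.card (Fin (p ^ n)) = Module.finrank (ZMod p) (Rpn p n) := by
  rw [Module.finrank_eq_card_basis (mBasis p (p ^ n))]
  simp [ZMod.card]

noncomputable def tBasis : Module.Basis (Fin (p ^ n)) (ZMod p) (Rpn p n) :=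
  basisOfTopLeSpanOfCardEqFinrank (fun i : Fin (p ^ n) => (sigmaPn p n - 1) ^ (i : ℕ))
    (span_t_top p n) (card_finrank p n)

lemma tBasis_apply (i : Fin (p ^ n)) : tBasis p n i = (sigmaPn p n - 1) ^ (i : ℕ) := by
  simp [tBasis, coe_basisOfTopLeSpanOfCardEqFinrank]

lemma div_sq (h2 : 2 ≤ p ^ n) (a : Rpn p n)
    (h : (sigmaPn p n - 1) ^ (p ^ n - 2) * a = 0) :
    ∃ b, a = (sigmaPn p n - 1) ^ 2 * b := by
  set t := sigmaPn p n - 1 with ht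
  set B := tBasis p n
  set c := B.repr a with hc
  have hrepr : a = ∑ i : Fin (p ^ n), c i • t ^ (i : ℕ) := by
    conv_lhs => rw [← B.sum_repr a]
    exact Finset.sum_congr rfl fun i _ => by rw [tBasis_apply]
  have hmul : (0 : Rpn p n) = c ⟨0, by omega⟩ • t ^ (p ^ n - 2)
      + c ⟨1, by omega⟩ • t ^ (p ^ n - 1) := by
    rw [← h, hrepr, Finset.mul_sum]
    have hterm : ∀ i : Fin (p ^ n),
        t ^ (p ^ n - 2) * (c i • t ^ (i : ℕ)) = c i • t ^ (p ^ n - 2 + (i : ℕ)) := by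
      intro i; rw [mul_smul_comm, pow_add]
    rw [Finset.sum_congr rfl fun i _ => hterm i]
    rw [← Finset.sum_subset (Finset.subset_univ
      ({⟨0, by omega⟩, ⟨1, by omega⟩} : Finset (Fin (p ^ n)))) ?_]
    · rw [Finset.sum_pair (by simp [Fin.ext_iff])]
      simp only [Fin.val_mk]
      rw [Nat.add_zero, show p ^ n - 2 + 1 = p ^ n - 1 by omega]
    · intro i _ hi
      have hle : p ^ n ≤ p ^ n - 2 + (i : ℕ) := by
        simp only [Finset.mem_insert, Finset.mem_singleton, Fin.ext_iff, Fin.val_mk, not_or] at hi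
        omega
      rw [← Nat.sub_add_cancel hle, pow_add, t_pow_card]
      simp
  have hzero : ∀ i : Fin (p ^ n), (i : ℕ) < 2 → c i = 0 := by
    have hb2 : (B ⟨p ^ n - 2, by omega⟩ : Rpn p n) = t ^ (p ^ n - 2) := tBasis_apply p n _
    have hb1 : (B ⟨p ^ n - 1, by omega⟩ : Rpn p n) = t ^ (p ^ n - 1) := tBasis_apply p n _
    rw [← hb2, ← hb1] at hmul
    have hr := congrArg (B.repr) hmul
    rw [map_zero, map_add, map_smul, map_smul, B.repr_self, B.repr_self] at hr
    have h01 : c ⟨0, by omega⟩ = 0 ∧ c ⟨1, by omega⟩ = 0 := by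
      constructor
      · have := congrArg (fun f => f ⟨p ^ n - 2, by omega⟩) hr
        simpa [Finsupp.single_apply, Fin.ext_iff,
          show ¬ (p ^ n - 1 = p ^ n - 2) by omega] using this.symm
      · have := congrArg (fun f => f ⟨p ^ n - 1, by omega⟩) hr
        simpa [Finsupp.single_apply, Fin.ext_iff,
          show ¬ (p ^ n - 2 = p ^ n - 1) by omega] using this.symm
    intro i hi
    have : (i : ℕ) = 0 ∨ (i : ℕ) = 1 := by omega
    rcases this with h0 | h1
    · have : i = ⟨0, by omega⟩ := Fin.ext h0
      rw [this]; exact h01.1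
    · have : i = ⟨1, by omega⟩ := Fin.ext h1
      rw [this]; exact h01.2
  refine ⟨∑ i : Fin (p ^ n), c i • t ^ ((i : ℕ) - 2), ?_⟩
  rw [Finset.mul_sum, hrepr]
  refine Finset.sum_congr rfl fun i _ => ?_
  by_cases hi : (i : ℕ) < 2
  · rw [hzero i hi]; simp
  · rw [mul_smul_comm, ← pow_add]
    congr 2
    omega

end aux

/-- Proposition 4.2: if an `R = 𝔽_p[G]`-module `W` contains a submodule `V ≅ R^k`
and an element `δ ∉ V` with `(σ-1)^{pⁿ-1}·δ = 0`, then `W` contains at least `p^k`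
submodules isomorphic to `R^k`. -/
theorem many_free_submodules (p n k : ℕ) (hp : p.Prime) (hn : 0 < n) (hk : 0 < k)
    (W : Type*) [AddCommGroup W] [Module (Rpn p n) W]
    (V : Submodule (Rpn p n) W) (hV : Nonempty (V ≃ₗ[Rpn p n] (Fin k → Rpn p n)))
    (δ : W) (hδ₁ : ((sigmaPn p n - 1) ^ (p ^ n - 1)) • δ = 0) (hδ₂ : δ ∉ V) :
    (p ^ k : Cardinal) ≤
      Cardinal.mk {V' : Submodule (Rpn p n) W //
        Nonempty (V' ≃ₗ[Rpn p n] (Fin k → Rpn p n))} := by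
  classical
  haveI : Fact p.Prime := ⟨hp⟩
  haveI : NeZero (p ^ n) := ⟨pow_ne_zero _ hp.pos.ne'⟩
  have h2 : 2 ≤ p ^ n := le_trans hp.two_le (Nat.le_self_pow hn.ne' p)
  set t : Rpn p n := sigmaPn p n - 1 with ht
  obtain ⟨eV⟩ := hV
  set E : (Fin k → Rpn p n) →ₗ[Rpn p n] W :=
    V.subtype ∘ₗ (eV.symm : (Fin k → Rpn p n) →ₗ[Rpn p n] V) with hE
  have hE_inj : Function.Injective E :=
    V.injective_subtype.comp eV.symm.injective
  have hE_mem : ∀ r, E r ∈ V := fun r => (eV.symm r).2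
  -- Step 1: find ε₀ ∉ V with t • ε₀ ∈ V
  have hexP : ∃ j, t ^ j • δ ∈ V := ⟨p ^ n - 1, by rw [hδ₁]; exact V.zero_mem⟩
  set j0 := Nat.find hexP with hj0def
  have hj0 : t ^ j0 • δ ∈ V := Nat.find_spec hexP
  have hj0pos : j0 ≠ 0 := by
    intro h
    apply hδ₂
    have := hj0
    rw [h, pow_zero, one_smul] at this
    exact this
  obtain ⟨m, hm⟩ : ∃ m, j0 = m + 1 := ⟨j0 - 1, by omega⟩
  set ε₀ := t ^ m • δ with hε₀
  have hε₀_nmem : ε₀ ∉ V := Nat.find_min hexP (by omega)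
  have htε₀ : t • ε₀ ∈ V := by
    have h' : t • ε₀ = t ^ j0 • δ := by
      rw [hε₀, smul_smul, ← pow_succ', hm]
    rw [h']; exact hj0
  have hkill : (t ^ (p ^ n - 2)) • (t • ε₀) = 0 := by
    rw [hε₀, smul_smul, smul_smul]
    have h3 : t ^ (p ^ n - 2) * t * t ^ m = t ^ m * t ^ (p ^ n - 1) := by
      have e1 : t ^ (p ^ n - 2) * t * t ^ m = t ^ (p ^ n - 2 + 1 + m) := by
        rw [pow_add, pow_add, pow_one]
      rw [e1, show p ^ n - 2 + 1 + m = m + (p ^ n - 1) by omega, pow_add]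
    rw [h3, mul_smul, hδ₁, smul_zero]
  -- Step 2: adjust ε₀ to ε with t • ε = 0
  set v : V := ⟨t • ε₀, htε₀⟩ with hv
  set x := eV v with hx
  have hxi : ∀ i, t ^ (p ^ n - 2) * x i = 0 := by
    have h0 : t ^ (p ^ n - 2) • v = 0 := Subtype.ext (by simpa using hkill)
    have h1 : t ^ (p ^ n - 2) • x = 0 := by
      rw [hx, ← map_smul, h0, map_zero]
    intro i
    have := congrFun h1 i
    simpa using this
  choose b hb using fun i => div_sq p n h2 (x i) (hxi i)
  set u : V := eV.symm (fun i => t * b i) with hu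
  set ε := ε₀ - (u : W) with hεdef
  have hεV : ε ∉ V := by
    intro hmem
    apply hε₀_nmem
    have := V.add_mem hmem u.2
    rw [hεdef, sub_add_cancel] at this
    exact this
  have htε : t • ε = 0 := by
    have h1 : t • (u : W) = ((t • u : V) : W) := rfl
    have h2' : (t • u : V) = v := by
      apply eV.injective
      rw [map_smul, hu, LinearEquiv.apply_symm_apply, ← hx]
      funext i
      have := hb i
      simp only [Pi.smul_apply, smul_eq_mul]
      rw [this]
      ring
    rw [hεdef, smul_sub, h1, h2']
    simp [hv]
  -- Key scalar lemma
  have hkey : ∀ r : Rpn p n, ∃ l : ZMod p,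
      r • ε = algebraMap (ZMod p) (Rpn p n) l • ε := by
    intro r
    obtain ⟨l, s, hs⟩ := decomp p n r
    refine ⟨l, ?_⟩
    rw [hs, add_smul, mul_comm, mul_smul, htε, smul_zero, add_zero]
  have hεne : ε ≠ 0 := fun h => hεV (h ▸ V.zero_mem)
  have hsc : ∀ (S : Submodule (Rpn p n) W) (l : ZMod p), l ≠ 0 →
      algebraMap (ZMod p) (Rpn p n) l • ε ∈ S → ε ∈ S := by
    intro S l hl hmem
    have := S.smul_mem (algebraMap (ZMod p) (Rpn p n) l⁻¹) hmem
    rwa [smul_smul, ← map_mul, inv_mul_cancel₀ hl, map_one, one_smul] at this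
  -- The family of maps
  set L : (Fin k → ZMod p) → ((Fin k → Rpn p n) →ₗ[Rpn p n] Rpn p n) := fun c =>
    ∑ i, algebraMap (ZMod p) (Rpn p n) (c i) • LinearMap.proj i with hL
  have hL_single : ∀ c (i : Fin k),
      L c (Pi.single i 1) = algebraMap (ZMod p) (Rpn p n) (c i) := by
    intro c i
    rw [hL]
    simp only [LinearMap.coe_sum, Finset.sum_apply, LinearMap.smul_apply,
      LinearMap.proj_apply, Pi.single_apply, smul_eq_mul]
    rw [Finset.sum_eq_single i]
    · simp
    · intro j _ hj
      simp [hj]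
    · simp
  set φ : (Fin k → ZMod p) → ((Fin k → Rpn p n) →ₗ[Rpn p n] W) := fun c =>
    E + (L c).smulRight ε with hφ
  have hφ_apply : ∀ c r, φ c r = E r + L c r • ε := fun c r => rfl
  have hφ_zero : ∀ c r, φ c r = 0 → r = 0 := by
    intro c r hr0
    rw [hφ_apply] at hr0
    obtain ⟨l, hl⟩ := hkey (L c r)
    rw [hl] at hr0
    by_cases hl0 : l = 0
    · rw [hl0, map_zero, zero_smul, add_zero] at hr0
      exact hE_inj (by rw [hr0, map_zero])
    · exfalso
      apply hεV
      apply hsc V l hl0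
      have : algebraMap (ZMod p) (Rpn p n) l • ε = -(E r) :=
        eq_neg_of_add_eq_zero_right (by rw [add_comm] at hr0; rw [add_comm]; exact hr0)
      rw [this]
      exact V.neg_mem (hE_mem r)
  have hφ_inj : ∀ c, Function.Injective (φ c) := by
    intro c r₁ r₂ h
    have : φ c (r₁ - r₂) = 0 := by rw [map_sub, h, sub_self]
    have := hφ_zero c _ this
    exact sub_eq_zero.mp this
  have hε_nrange : ∀ c, ε ∉ LinearMap.range (φ c) := by
    intro c hmem
    obtain ⟨r, hr⟩ := hmem
    rw [hφ_apply] at hr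
    obtain ⟨l, hl⟩ := hkey (L c r)
    have hEr : algebraMap (ZMod p) (Rpn p n) (1 - l) • ε = E r := by
      rw [map_sub, map_one, sub_smul, one_smul, ← hl]
      exact sub_eq_of_eq_add hr.symm
    by_cases h1 : l = 1
    · have hEr0 : E r = 0 := by rw [← hEr, h1, sub_self, map_zero, zero_smul]
      have hr0 : r = 0 := hE_inj (by rw [hEr0, map_zero])
      apply hεne
      have hLr : L c r = 0 := by rw [hr0, map_zero]
      rw [hLr, zero_smul, h1, map_one, one_smul] at hl
      exact hl.symm
    · apply hεV
      refine hsc V (1 - l) (sub_ne_zero_of_ne (fun h => h1 h.symm)) ?_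
      rw [hEr]
      exact hE_mem r
  have hΦ_inj : Function.Injective (fun c => LinearMap.range (φ c)) := by
    intro c c' hcc
    simp only at hcc
    by_contra hne
    obtain ⟨i, hi⟩ : ∃ i, c i ≠ c' i := Function.ne_iff.mp hne
    have hm1 : φ c (Pi.single i 1) ∈ LinearMap.range (φ c) := ⟨_, rfl⟩
    have hm2 : φ c' (Pi.single i 1) ∈ LinearMap.range (φ c) := by
      rw [hcc]; exact ⟨_, rfl⟩
    have hd : φ c (Pi.single i 1) - φ c' (Pi.single i 1)
        = algebraMap (ZMod p) (Rpn p n) (c i - c' i) • ε := by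
      rw [hφ_apply, hφ_apply, hL_single, hL_single, map_sub, sub_smul]
      abel
    have hmem : algebraMap (ZMod p) (Rpn p n) (c i - c' i) • ε
        ∈ LinearMap.range (φ c) := by
      rw [← hd]; exact Submodule.sub_mem _ hm1 hm2
    exact hε_nrange c (hsc _ _ (sub_ne_zero_of_ne hi) hmem)
  set Φ : (Fin k → ZMod p) → {V' : Submodule (Rpn p n) W //
      Nonempty (V' ≃ₗ[Rpn p n] (Fin k → Rpn p n))} :=
    fun c => ⟨LinearMap.range (φ c),
      ⟨(LinearEquiv.ofInjective (φ c) (hφ_inj c)).symm⟩⟩ with hΦ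
  have hΦinj : Function.Injective Φ := by
    intro c c' h
    exact hΦ_inj (congrArg Subtype.val h)
  have hcard : (p ^ k : Cardinal) = Cardinal.mk (ULift (Fin k → ZMod p)) := by
    rw [Cardinal.mk_fintype]
    simp [ZMod.card]
  refine hcard.trans_le (Cardinal.mk_le_of_injective
    (f := fun c : ULift (Fin k → ZMod p) => Φ c.down) ?_)
  intro a b h
  exact ULift.down_injective (hΦinj h)
end

section
/- Let p be a prime, n a positive integer, and k a positive integer. Let W be a module over R = 𝔽_p[G] (written additively), let v_1, ..., v_k ∈ W be elements that form a basis of a free R-submodule of rank k (i.e., the only relation ∑_{i=1}^k g_i·v_i = 0 with g_i ∈ R is the trivial one), and let δ ∈ W satisfy (σ-1)^{p^n-1}·δ = 0. Then for every tuple (c_1,...,c_k) ∈ 𝔽_p^k, the elements v_1 + c_1·δ, ..., v_k + c_k·δ also admit only the trivial R-linear relation; in particular the R-submodule they generate is free of rank k. (Freeness claim in the proof of Proposition 4.2.) -/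
/- ### Auxiliary lemmas -/

lemma pbf_algmap_inj (p n : ℕ) : Function.Injective (algebraMap (ZMod p) (Rpn p n)) := by
  intro a b hab
  have := congrArg (fun f => (f : MonoidAlgebra (ZMod p) (Gpn p n)).coeff 1) hab
  simpa [MonoidAlgebra.coe_algebraMap, MonoidAlgebra.coeff_single, Finsupp.single_apply] using this

lemma pbf_charRpn (p n : ℕ) [hp : Fact p.Prime] : CharP (Rpn p n) p :=
  charP_of_injective_algebraMap (pbf_algmap_inj p n) p

lemma pbf_sigma_pow (p n : ℕ) (m : ℕ) :
    (sigmaPn p n) ^ m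
      = MonoidAlgebra.of (ZMod p) (Gpn p n) (Multiplicative.ofAdd ((m : ZMod (p ^ n)))) := by
  rw [sigmaPn, ← map_pow]
  congr 1
  rw [← ofAdd_nsmul]
  simp

/-- `(σ - 1)^{pⁿ} = 0`. -/
lemma pbf_lemA (p n : ℕ) [hp : Fact p.Prime] :
    (sigmaPn p n - 1) ^ (p ^ n) = 0 := by
  have := pbf_charRpn p n
  rw [sub_pow_char_pow]
  have h1 : (sigmaPn p n) ^ (p ^ n) = 1 := by
    rw [pbf_sigma_pow, show ((p ^ n : ℕ) : ZMod (p ^ n)) = 0 by simp, ofAdd_zero, map_one]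
  rw [h1, one_pow, sub_self]

-- generic: x^q = 1 → x^m = x^(m % q)
lemma pbf_pow_mod_of_pow_eq_one {M : Type*} [Monoid M] {x : M} {q : ℕ} (h : x ^ q = 1) (m : ℕ) :
    x ^ m = x ^ (m % q) := by
  conv_lhs => rw [← Nat.div_add_mod m q, pow_add, pow_mul, h, one_pow, one_mul]

/-- Monoid hom `ℤ/pⁿℤ →* M` sending the generator to an element of order dividing `pⁿ`. -/
noncomputable def pbf_psiHom (p n : ℕ) [NeZero (p ^ n)] {M : Type*} [Monoid M] (x : M)
    (h : x ^ (p ^ n) = 1) : Gpn p n →* M where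
  toFun g := x ^ (g.toAdd).val
  map_one' := by simp [ZMod.val_zero]
  map_mul' a b := by
    show x ^ (ZMod.val (a.toAdd + b.toAdd)) = _
    rw [ZMod.val_add, ← pbf_pow_mod_of_pow_eq_one h, pow_add]

/-- `(σ - 1)^{pⁿ - 1} ≠ 0`. -/
lemma pbf_lemB (p n : ℕ) [hp : Fact p.Prime] (hn : 0 < n) :
    (sigmaPn p n - 1) ^ (p ^ n - 1) ≠ 0 := by
  have hq1 : 1 < p ^ n := Nat.one_lt_pow hn.ne' hp.out.one_lt
  have : NeZero (p ^ n) := ⟨by omega⟩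
  set q := p ^ n
  set f : Polynomial (ZMod p) := Polynomial.X ^ q - 1 with hf
  have hroot : (AdjoinRoot.root f) ^ q = 1 := by
    have h2 : (AdjoinRoot.root f) ^ q - 1 = 0 := by
      have := AdjoinRoot.mk_self (f := f)
      rwa [hf, map_sub, map_pow, map_one, AdjoinRoot.mk_X] at this
    linear_combination h2
  set ψ := MonoidAlgebra.lift (ZMod p) (AdjoinRoot f) (Gpn p n) (pbf_psiHom p n _ hroot)
  intro hzero
  have hψσ : ψ (sigmaPn p n) = AdjoinRoot.root f := by
    rw [sigmaPn, MonoidAlgebra.lift_of]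
    show (AdjoinRoot.root f) ^ (ZMod.val (1 : ZMod q)) = _
    have : ZMod.val (1 : ZMod q) = 1 := by
      have : Fact (1 < q) := ⟨hq1⟩
      exact ZMod.val_one q
    rw [this, pow_one]
  have := congrArg ψ hzero
  rw [map_pow, map_sub, map_one, hψσ, map_zero] at this
  have hmk : AdjoinRoot.root f - 1 = AdjoinRoot.mk f (Polynomial.X - 1) := by
    rw [map_sub, AdjoinRoot.mk_X, map_one]
  rw [hmk, ← map_pow, AdjoinRoot.mk_eq_zero] at this
  have hfeq : f = (Polynomial.X - 1 : Polynomial (ZMod p)) ^ q := by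
    rw [hf, sub_pow_char_pow, one_pow]
  rw [hfeq] at this
  have hX1 : (Polynomial.X - 1 : Polynomial (ZMod p)) ≠ 0 := by
    intro h
    have := congrArg Polynomial.natDegree h
    rw [Polynomial.natDegree_zero] at this
    rw [show (Polynomial.X - 1 : Polynomial (ZMod p)) = Polynomial.X - Polynomial.C 1 by simp,
      Polynomial.natDegree_X_sub_C] at this
    exact one_ne_zero this
  have hdvd := Polynomial.natDegree_le_of_dvd this (pow_ne_zero _ hX1)
  rw [Polynomial.natDegree_pow, Polynomial.natDegree_pow] at hdvd
  have : (Polynomial.X - 1 : Polynomial (ZMod p)).natDegree = 1 := by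
    simpa using Polynomial.natDegree_X_sub_C (1 : ZMod p)
  rw [this] at hdvd
  omega

/-- The augmentation map. -/
noncomputable def pbf_eps (p n : ℕ) : Rpn p n →ₐ[ZMod p] ZMod p :=
  MonoidAlgebra.lift (ZMod p) (ZMod p) (Gpn p n) 1

/-- Any element is congruent mod `(σ - 1)` to the scalar given by the augmentation map. -/
lemma pbf_eps_decomp (p n : ℕ) [NeZero (p ^ n)] (h : Rpn p n) :
    (sigmaPn p n - 1) ∣ (h - algebraMap (ZMod p) (Rpn p n) (pbf_eps p n h)) := by
  induction h using MonoidAlgebra.induction with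
  | zero => simp
  | single_add g a f hg ha ih =>
    set f' : Rpn p n := f with hf'
    have key : (sigmaPn p n - 1) ∣
        (MonoidAlgebra.single g a
          - algebraMap (ZMod p) (Rpn p n) (pbf_eps p n (MonoidAlgebra.single g a))) := by
      have heps : pbf_eps p n (MonoidAlgebra.single g a) = a := by
        rw [pbf_eps, MonoidAlgebra.lift_single]; simp
      rw [heps]
      have hsingle : (MonoidAlgebra.single g a : Rpn p n)
          = a • (sigmaPn p n) ^ (g.toAdd).val := by
        rw [pbf_sigma_pow]
        have : ((g.toAdd.val : ℕ) : ZMod (p ^ n)) = g.toAdd := by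
          rw [ZMod.natCast_val, ZMod.cast_id]
        rw [this]
        show _ = a • MonoidAlgebra.single (Multiplicative.ofAdd g.toAdd) 1
        rw [MonoidAlgebra.smul_single]
        simp
      rw [hsingle]
      have halg : algebraMap (ZMod p) (Rpn p n) a = a • (1 : Rpn p n) := by
        rw [Algebra.algebraMap_eq_smul_one]
      rw [halg, ← smul_sub]
      have hd : (sigmaPn p n - 1) ∣ ((sigmaPn p n) ^ (g.toAdd).val - 1 ^ (g.toAdd).val) :=
        sub_dvd_pow_sub_pow _ _ _
      rw [one_pow] at hd
      rw [smul_sub] at *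
      calc sigmaPn p n - 1
          ∣ algebraMap (ZMod p) (Rpn p n) a * ((sigmaPn p n) ^ (g.toAdd).val - 1) := hd.mul_left _
        _ = a • (sigmaPn p n) ^ (g.toAdd).val - a • 1 := by
            rw [Algebra.smul_def, Algebra.smul_def, mul_sub]
    show (sigmaPn p n - 1) ∣ ((MonoidAlgebra.single g a + f')
        - algebraMap (ZMod p) (Rpn p n) (pbf_eps p n (MonoidAlgebra.single g a + f')))
    have := dvd_add key ih
    have heq : (MonoidAlgebra.single g a
          - algebraMap (ZMod p) (Rpn p n) (pbf_eps p n (MonoidAlgebra.single g a)))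
        + (f' - algebraMap (ZMod p) (Rpn p n) (pbf_eps p n f'))
        = ((MonoidAlgebra.single g a + f')
          - algebraMap (ZMod p) (Rpn p n) (pbf_eps p n (MonoidAlgebra.single g a + f'))) := by
      rw [show pbf_eps p n (MonoidAlgebra.single g a + f')
          = pbf_eps p n (MonoidAlgebra.single g a) + pbf_eps p n f' from map_add _ _ _, map_add]
      ring
    rw [heq] at this
    exact this

/-- If `(σ-1)^{pⁿ-1} · h = 0`, then `h` is divisible by `σ - 1`. -/
lemma pbf_ann (p n : ℕ) [hp : Fact p.Prime] (hn : 0 < n) (h : Rpn p n)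
    (hh : (sigmaPn p n - 1) ^ (p ^ n - 1) * h = 0) :
    ∃ h', h = (sigmaPn p n - 1) * h' := by
  have hq1 : 1 < p ^ n := Nat.one_lt_pow hn.ne' hp.out.one_lt
  have : NeZero (p ^ n) := ⟨by omega⟩
  obtain ⟨h', hh'⟩ := pbf_eps_decomp p n h
  have hrep : h = algebraMap (ZMod p) (Rpn p n) (pbf_eps p n h) + (sigmaPn p n - 1) * h' := by
    rw [← hh']; ring
  have hpow : (sigmaPn p n - 1) ^ (p ^ n - 1) * (sigmaPn p n - 1) = 0 := by
    rw [← pow_succ, show p ^ n - 1 + 1 = p ^ n by omega, pbf_lemA]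
  have hc : (pbf_eps p n h) • ((sigmaPn p n - 1) ^ (p ^ n - 1)) = 0 := by
    have h2 := hh
    rw [hrep, mul_add, ← mul_assoc, hpow, zero_mul, add_zero] at h2
    rw [Algebra.smul_def, mul_comm]
    exact h2
  have : pbf_eps p n h = 0 := by
    rcases smul_eq_zero.mp hc with h0 | h0
    · exact h0
    · exact absurd h0 (pbf_lemB p n hn)
  rw [this, map_zero, zero_add] at hrep
  exact ⟨h', hrep⟩

/-- Freeness claim in the proof of Proposition 4.2: if `v₁, …, v_k` admit only the
trivial `R = 𝔽_p[G]`-linear relation and `(σ-1)^{pⁿ-1}·δ = 0`, then for every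
`c ∈ 𝔽_p^k` the elements `vᵢ + cᵢ·δ` also admit only the trivial relation; in
particular the submodule they generate is free of rank `k`. -/
theorem perturbed_basis_free (p n k : ℕ) (hp : p.Prime) (hn : 0 < n) (hk : 0 < k)
    (W : Type*) [AddCommGroup W] [Module (Rpn p n) W]
    (v : Fin k → W)
    (hv : ∀ g : Fin k → Rpn p n, ∑ i, g i • v i = 0 → ∀ i, g i = 0)
    (δ : W) (hδ : ((sigmaPn p n - 1) ^ (p ^ n - 1)) • δ = 0) :
    ∀ c : Fin k → ZMod p,
      (∀ g : Fin k → Rpn p n,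
          ∑ i, g i • (v i + algebraMap (ZMod p) (Rpn p n) (c i) • δ) = 0 → ∀ i, g i = 0) ∧
        Nonempty
          ((Submodule.span (Rpn p n)
              (Set.range fun i => v i + algebraMap (ZMod p) (Rpn p n) (c i) • δ)) ≃ₗ[Rpn p n]
            (Fin k → Rpn p n)) := by
  have : Fact p.Prime := ⟨hp⟩
  have hq1 : 1 < p ^ n := Nat.one_lt_pow hn.ne' hp.one_lt
  set S := sigmaPn p n - 1 with hS
  set q := p ^ n with hq
  intro c
  have hrel : ∀ g : Fin k → Rpn p n,
      ∑ i, g i • (v i + algebraMap (ZMod p) (Rpn p n) (c i) • δ) = 0 → ∀ i, g i = 0 := by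
    intro g hg
    -- rewrite the relation
    have hg' : (∑ i, g i • v i) + (∑ i, g i * algebraMap (ZMod p) (Rpn p n) (c i)) • δ = 0 := by
      rw [Finset.sum_smul]
      rw [← Finset.sum_add_distrib]
      rw [← hg]
      congr 1
      ext i
      rw [smul_add, smul_smul]
    -- induction: g i ∈ (S^m) for all m ≤ q
    have key : ∀ m, m ≤ q → ∃ h : Fin k → Rpn p n, ∀ i, g i = S ^ m * h i := by
      intro m
      induction m with
      | zero => exact fun _ => ⟨g, fun i => by rw [pow_zero, one_mul]⟩
      | succ m ih =>
        intro hm1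
        obtain ⟨h, hh⟩ := ih (by omega)
        -- multiply the relation by S^(q-1-m)
        have hmul := congrArg (fun w => (S ^ (q - 1 - m)) • w) hg'
        simp only [smul_zero, smul_add, Finset.smul_sum, smul_smul] at hmul
        -- the δ-term vanishes
        have hδterm : (S ^ (q - 1 - m) * ∑ i, g i * algebraMap (ZMod p) (Rpn p n) (c i)) • δ
            = 0 := by
          have : S ^ (q - 1 - m) * ∑ i, g i * algebraMap (ZMod p) (Rpn p n) (c i)
              = (∑ i, h i * algebraMap (ZMod p) (Rpn p n) (c i)) * S ^ (q - 1) := by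
            rw [Finset.mul_sum, Finset.sum_mul]
            congr 1
            ext i
            rw [hh i]
            have : S ^ (q - 1 - m) * (S ^ m * h i * algebraMap (ZMod p) (Rpn p n) (c i))
                = (S ^ (q - 1 - m) * S ^ m) * (h i * algebraMap (ZMod p) (Rpn p n) (c i)) := by
              ring
            rw [this, ← pow_add, show q - 1 - m + m = q - 1 by omega]
            ring
          rw [this, mul_smul, hδ, smul_zero]
        rw [hδterm, add_zero] at hmul
        have hzero : ∀ i, S ^ (q - 1 - m) * g i = 0 := hv (fun i => S ^ (q - 1 - m) * g i) hmul
        -- so S^(q-1) * h i = 0 for all i, hence h i divisible by S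
        have hSh : ∀ i, S ^ (q - 1) * h i = 0 := by
          intro i
          have := hzero i
          rw [hh i, ← mul_assoc, ← pow_add, show q - 1 - m + m = q - 1 by omega] at this
          exact this
        choose h' hh' using fun i => pbf_ann p n hn (h i) (hSh i)
        exact ⟨h', fun i => by rw [hh i, hh' i, pow_succ]; ring⟩
    intro i
    obtain ⟨h, hh⟩ := key q le_rfl
    rw [hh i, pbf_lemA, zero_mul]
  refine ⟨hrel, ?_⟩
  have hli : LinearIndependent (Rpn p n)
      (fun i => v i + algebraMap (ZMod p) (Rpn p n) (c i) • δ) := by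
    rw [Fintype.linearIndependent_iff]
    exact hrel
  exact ⟨(Module.Basis.span hli).equivFun⟩
end

section
/- Let p be a prime, n a positive integer, and k a positive integer, and let Γ = (𝔽_p[G])^k ⋊ G. Then for every element x = ((f_1, ..., f_k), g) of Γ, one has x^{p^n} = (((g-1)^{p^n-1}·f_1, ..., (g-1)^{p^n-1}·f_k), 1); in particular, x^{p^n} lies in the subgroup ((σ-1)·𝔽_p[G])^k × {1}, i.e., each coordinate of the module part of x^{p^n} is divisible by σ - 1 in 𝔽_p[G]. (The p^n-th power computation in the proof of Theorem 1.1.) -/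
/-- The coordinatewise action of `G = ℤ/pⁿℤ` on `(𝔽_p[G])^k` by left multiplication. -/
noncomputable def kAct (p n k : ℕ) :
    Gpn p n →* MulAut (Multiplicative (Fin k → Rpn p n)) where
  toFun g := AddEquiv.toMultiplicative
    { toFun := fun f i => MonoidAlgebra.of (ZMod p) (Gpn p n) g * f i
      invFun := fun f i => MonoidAlgebra.of (ZMod p) (Gpn p n) g⁻¹ * f i
      left_inv := fun f => funext fun i => by
        simp [← mul_assoc, ← map_mul, ← MonoidAlgebra.one_def]
      right_inv := fun f => funext fun i => by
        simp [← mul_assoc, ← map_mul, ← MonoidAlgebra.one_def]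
      map_add' := fun f₁ f₂ => funext fun i => by simp [mul_add] }
  map_one' := by
    ext f
    simp [AddEquiv.toMultiplicative, ← MonoidAlgebra.one_def]
  map_mul' g₁ g₂ := by
    ext f : 1
    funext i
    show MonoidAlgebra.single (g₁ * g₂) 1 * (Multiplicative.toAdd f) i =
      MonoidAlgebra.single g₁ 1 * (MonoidAlgebra.single g₂ 1 * (Multiplicative.toAdd f) i)
    rw [← mul_assoc, MonoidAlgebra.single_mul_single, mul_one]

/-- The semidirect product `(𝔽_p[G])^k ⋊ G`. -/
noncomputable def SDP (p n k : ℕ) : Type :=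
  SemidirectProduct (Multiplicative (Fin k → Rpn p n)) (Gpn p n) (kAct p n k)

noncomputable instance (p n k : ℕ) : Group (SDP p n k) :=
  inferInstanceAs (Group (SemidirectProduct _ _ (kAct p n k)))

/-- Power formula in a semidirect product with abelian kernel. -/
lemma sdp_pow_aux {N G : Type*} [CommGroup N] [Group G] (φ : G →* MulAut N)
    (a : N) (g : G) (m : ℕ) :
    ((⟨a, g⟩ : N ⋊[φ] G) ^ m) = ⟨∏ j ∈ Finset.range m, φ (g ^ j) a, g ^ m⟩ := by
  induction m with
  | zero => simp
  | succ m ih =>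
    rw [pow_succ, ih]
    ext
    · show (∏ j ∈ Finset.range m, φ (g ^ j) a) * φ (g ^ m) a = _
      rw [Finset.prod_range_succ]
    · show g ^ m * g = g ^ (m + 1)
      rw [pow_succ]

/-- Geometric sum identity in characteristic `p`: `(x-1)^(pⁿ-1) = ∑_{j<pⁿ} xʲ`. -/
lemma geom_char (p : ℕ) [Fact p.Prime] {R : Type*} [CommRing R] [Algebra (ZMod p) R]
    (x : R) (m : ℕ) :
    (x - 1) ^ (p ^ m - 1) = ∑ j ∈ Finset.range (p ^ m), x ^ j := by
  have hq : 1 ≤ p ^ m := Nat.one_le_pow _ _ (Fact.out : p.Prime).pos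
  have hpoly : ((Polynomial.X : Polynomial (ZMod p)) - 1) ^ (p ^ m - 1) =
      ∑ j ∈ Finset.range (p ^ m), (Polynomial.X : Polynomial (ZMod p)) ^ j := by
    apply mul_right_cancel₀ (b := (Polynomial.X : Polynomial (ZMod p)) - 1)
    · have : ((Polynomial.X : Polynomial (ZMod p)) - Polynomial.C 1) ≠ 0 :=
        Polynomial.X_sub_C_ne_zero 1
      simpa using this
    · rw [geom_sum_mul, ← pow_succ, Nat.sub_add_cancel hq, sub_pow_char_pow, one_pow]
  have := congrArg (Polynomial.aeval x) hpoly
  simpa [map_pow, map_sub, map_sum] using this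

/-- The `pⁿ`-th power computation in the proof of Theorem 1.1: in
`Γ = (𝔽_p[G])^k ⋊ G`, the `pⁿ`-th power of `((f₁,…,f_k), g)` is
`(((g-1)^{pⁿ-1}f₁, …, (g-1)^{pⁿ-1}f_k), 1)`, and each coordinate of the module part
is divisible by `σ - 1`. -/
theorem sdp_pow_pn (p n k : ℕ) (hp : p.Prime) (hn : 0 < n) (hk : 0 < k)
    (f : Fin k → Rpn p n) (g : Gpn p n) :
    ((⟨Multiplicative.ofAdd f, g⟩ : SDP p n k) ^ (p ^ n) =
      ⟨Multiplicative.ofAdd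
        (fun i => (MonoidAlgebra.of (ZMod p) (Gpn p n) g - 1) ^ (p ^ n - 1) * f i), 1⟩) ∧
    ∀ i, (sigmaPn p n - 1) ∣ (MonoidAlgebra.of (ZMod p) (Gpn p n) g - 1) ^ (p ^ n - 1) * f i := by
  haveI : Fact p.Prime := ⟨hp⟩
  haveI : NeZero (p ^ n) := ⟨(pow_pos hp.pos n).ne'⟩
  set X := MonoidAlgebra.of (ZMod p) (Gpn p n) g with hX
  have hg : g ^ (p ^ n) = 1 := by
    have : Multiplicative.toAdd (g ^ (p ^ n)) = Multiplicative.toAdd (1 : Gpn p n) := by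
      rw [toAdd_pow, toAdd_one, nsmul_eq_mul, ZMod.natCast_self, zero_mul]
    exact Multiplicative.toAdd.injective this
  constructor
  · show ((⟨Multiplicative.ofAdd f, g⟩ :
        SemidirectProduct (Multiplicative (Fin k → Rpn p n)) (Gpn p n) (kAct p n k)) ^ (p ^ n)) = _
    rw [sdp_pow_aux, hg]
    congr 1
    have hact : ∀ j : ℕ, (kAct p n k) (g ^ j) (Multiplicative.ofAdd f) =
        Multiplicative.ofAdd (fun i => X ^ j * f i) := by
      intro j
      show Multiplicative.ofAdd (fun i => MonoidAlgebra.of (ZMod p) (Gpn p n) (g ^ j) * f i) = _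
      rw [map_pow]
    simp only [hact]
    rw [← ofAdd_sum]
    congr 1
    funext i
    rw [Finset.sum_apply, ← Finset.sum_mul, geom_char]
  · intro i
    have hdvd : (sigmaPn p n - 1) ∣ (X - 1) := by
      have hrep : (Multiplicative.ofAdd (1 : ZMod (p ^ n))) ^ (Multiplicative.toAdd g).val = g := by
        apply Multiplicative.toAdd.injective
        rw [toAdd_pow, toAdd_ofAdd, nsmul_eq_mul, mul_one]
        exact ZMod.natCast_rightInverse _
      have : X = (sigmaPn p n) ^ (Multiplicative.toAdd g).val := by
        conv_lhs => rw [hX, ← hrep]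
        rw [map_pow, sigmaPn]
      rw [this]
      simpa using sub_dvd_pow_sub_pow (sigmaPn p n) 1 (Multiplicative.toAdd g).val
    have hne : p ^ n - 1 ≠ 0 := by
      have : 2 ≤ p ^ n := by
        calc 2 ≤ p := hp.two_le
        _ ≤ p ^ n := Nat.le_self_pow hn.ne' p
      omega
    exact dvd_mul_of_dvd_left (dvd_pow hdvd hne) (f i)
end

section
/- Let p be a prime, n a positive integer, and k a positive integer, and let Γ = (𝔽_p[G])^k ⋊ G. Let H be an 𝔽_p[G]-submodule of (𝔽_p[G])^k of index p. Then H × {1} is a normal subgroup of Γ, the p^n-th power of every element of Γ lies in H × {1}, and consequently the quotient group Γ/(H × {1}) has exponent dividing p^n; in particular Γ/(H × {1}) is not isomorphic to the cyclic group ℤ/p^{n+1}ℤ. (The contradiction derived in the proof of Theorem 1.1.) -/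
/-- The image of an `𝔽_p[G]`-submodule `H ⊆ (𝔽_p[G])^k` as the subgroup `H × {1}`
of the semidirect product `(𝔽_p[G])^k ⋊ G`. -/
noncomputable def HGamma (p n k : ℕ) (H : Submodule (Rpn p n) (Fin k → Rpn p n)) :
    Subgroup (SDP p n k) :=
  Subgroup.map
    (SemidirectProduct.inl : Multiplicative (Fin k → Rpn p n) →* SDP p n k)
    (AddSubgroup.toSubgroup H.toAddSubgroup)



lemma gpn_pow (p n : ℕ) (g : Gpn p n) : g ^ p ^ n = 1 := by
  have h : (p ^ n : ℕ) • Multiplicative.toAdd g = 0 := by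
    rw [nsmul_eq_mul, ZMod.natCast_self, zero_mul]
  have : g ^ p ^ n = Multiplicative.ofAdd ((p ^ n : ℕ) • Multiplicative.toAdd g) := by
    rw [ofAdd_nsmul, ofAdd_toAdd]
  rw [this, h]; rfl

lemma single_pow_one (p n : ℕ) (g : Gpn p n) :
    (MonoidAlgebra.single g (1 : ZMod p) : Rpn p n) ^ (p ^ n) = 1 := by
  rw [MonoidAlgebra.single_pow, one_pow, gpn_pow, MonoidAlgebra.one_def]

lemma pcast_zero (p n : ℕ) : ((p : ℕ) : Rpn p n) = 0 := by
  rw [← map_natCast (algebraMap (ZMod p) (Rpn p n)) p, ZMod.natCast_self, map_zero]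

lemma frob_iter (p : ℕ) (hp : p.Prime) (m : ℕ) (x : ZMod p) : x ^ p ^ m = x := by
  haveI := Fact.mk hp
  induction m with
  | zero => simp
  | succ m ih => rw [pow_succ, pow_mul, ih, ZMod.pow_card]

lemma psmul_zero (p n k : ℕ) (H : Submodule (Rpn p n) (Fin k → Rpn p n))
    (q : (Fin k → Rpn p n) ⧸ H) : p • q = 0 := by
  rw [← Nat.cast_smul_eq_nsmul (Rpn p n), pcast_zero, zero_smul]

lemma act_trivial (p n k : ℕ) (hp : p.Prime)
    (H : Submodule (Rpn p n) (Fin k → Rpn p n))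
    (hH : Nat.card ((Fin k → Rpn p n) ⧸ H) = p)
    (g : Gpn p n) (q : (Fin k → Rpn p n) ⧸ H) :
    (MonoidAlgebra.single g (1 : ZMod p) : Rpn p n) • q = q := by
  haveI := Fact.mk hp
  haveI : Finite ((Fin k → Rpn p n) ⧸ H) := Nat.finite_of_card_ne_zero (by rw [hH]; exact hp.pos.ne')
  haveI : Nontrivial ((Fin k → Rpn p n) ⧸ H) := by
    rw [← Finite.one_lt_card_iff_nontrivial, hH]; exact hp.one_lt
  obtain ⟨q0, hq0⟩ := exists_ne (0 : (Fin k → Rpn p n) ⧸ H)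
  have hord : addOrderOf q0 = p := addOrderOf_eq_prime (psmul_zero p n k H q0) hq0
  have htop : AddSubgroup.zmultiples q0 = ⊤ :=
    AddSubgroup.eq_top_of_card_eq _ (by rw [Nat.card_zmultiples, hord, hH])
  have hmem : ∀ x : (Fin k → Rpn p n) ⧸ H, ∃ z : ℤ, z • q0 = x := fun x =>
    AddSubgroup.mem_zmultiples_iff.mp (htop ▸ AddSubgroup.mem_top x)
  set s : Rpn p n := MonoidAlgebra.single g (1 : ZMod p) with hs
  obtain ⟨z0, hz0⟩ := hmem (s • q0)
  have key : ∀ m : ℕ, s ^ m • q0 = z0 ^ m • q0 := by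
    intro m
    induction m with
    | zero => simp
    | succ m ih =>
      rw [pow_succ, mul_smul, ← hz0, smul_comm, ih, smul_comm, ← mul_smul, ← pow_succ]
  have h1 : (z0 ^ p ^ n - 1) • q0 = 0 := by
    rw [sub_smul, one_smul, sub_eq_zero, ← key, single_pow_one, one_smul]
  have hdvd : (p : ℤ) ∣ z0 ^ p ^ n - 1 := by
    have := (addOrderOf_dvd_iff_zsmul_eq_zero (x := q0)).mpr h1
    rwa [hord] at this
  have hz1 : (p : ℤ) ∣ z0 - 1 := by
    have : ((z0 : ZMod p)) ^ p ^ n = 1 := by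
      have := (ZMod.intCast_zmod_eq_zero_iff_dvd _ p).mpr hdvd
      push_cast at this
      linear_combination this
    rw [frob_iter p hp n] at this
    have : ((z0 - 1 : ℤ) : ZMod p) = 0 := by push_cast [this]; ring
    exact (ZMod.intCast_zmod_eq_zero_iff_dvd _ p).mp this
  have hzq : ∀ z : ℤ, (p : ℤ) ∣ z → z • q0 = 0 := by
    rintro z ⟨t, rfl⟩
    rw [mul_smul, smul_comm, natCast_zsmul, psmul_zero, smul_zero]
  have hq0fix : s • q0 = q0 := by
    have := hzq _ hz1
    rw [sub_smul, one_smul, sub_eq_zero] at this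
    rw [← hz0, this]
  obtain ⟨z, hz⟩ := hmem q
  rw [← hz, smul_comm, hq0fix]

lemma pn_smul_zero (p n k : ℕ) (hn : 0 < n) (H : Submodule (Rpn p n) (Fin k → Rpn p n))
    (q : (Fin k → Rpn p n) ⧸ H) : (p ^ n) • q = 0 := by
  have e : p ^ n = p ^ (n - 1) * p := by rw [← pow_succ]; congr 1; omega
  calc (p ^ n) • q = (p ^ (n - 1) * p) • q := congrArg (fun t : ℕ => t • q) e
    _ = p ^ (n - 1) • (p • q) := mul_smul _ _ _
    _ = 0 := by rw [psmul_zero, smul_zero]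

lemma toAdd_kAct (p n k : ℕ) (g : Gpn p n) (f : Multiplicative (Fin k → Rpn p n)) :
    Multiplicative.toAdd (kAct p n k g f) =
      (MonoidAlgebra.single g (1 : ZMod p) : Rpn p n) • Multiplicative.toAdd f := by
  funext i
  rfl

lemma conj_formula (p n k : ℕ)
    (γ : SemidirectProduct (Multiplicative (Fin k → Rpn p n)) (Gpn p n) (kAct p n k))
    (a : Multiplicative (Fin k → Rpn p n)) :
    γ * SemidirectProduct.inl a * γ⁻¹ = SemidirectProduct.inl (kAct p n k γ.right a) := by
  have h : γ * SemidirectProduct.inl a * γ⁻¹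
      = SemidirectProduct.inl γ.left * (SemidirectProduct.inr γ.right *
        SemidirectProduct.inl a * SemidirectProduct.inr γ.right⁻¹) *
        SemidirectProduct.inl γ.left⁻¹ := by
    conv_lhs => rw [← SemidirectProduct.inl_left_mul_inr_right γ]
    rw [mul_inv_rev, ← map_inv, ← map_inv]
    group
  rw [h, ← SemidirectProduct.inl_aut, ← map_mul, ← map_mul,
      mul_comm γ.left, mul_assoc, mul_inv_cancel, mul_one]

lemma conj_mem_aux (p n k : ℕ) (H : Submodule (Rpn p n) (Fin k → Rpn p n))
    (γ : SemidirectProduct (Multiplicative (Fin k → Rpn p n)) (Gpn p n) (kAct p n k))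
    (a : Multiplicative (Fin k → Rpn p n)) (ha : Multiplicative.toAdd a ∈ H) :
    ∃ b, Multiplicative.toAdd b ∈ H ∧
      SemidirectProduct.inl b = γ * SemidirectProduct.inl a * γ⁻¹ :=
  ⟨kAct p n k γ.right a,
    by rw [toAdd_kAct]; exact H.smul_mem _ ha,
    (conj_formula p n k γ a).symm⟩

lemma pow_formula (p n k : ℕ) (hp : p.Prime)
    (H : Submodule (Rpn p n) (Fin k → Rpn p n))
    (hH : Nat.card ((Fin k → Rpn p n) ⧸ H) = p)
    (x : SemidirectProduct (Multiplicative (Fin k → Rpn p n)) (Gpn p n) (kAct p n k))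
    (j : ℕ) :
    (x ^ j).right = x.right ^ j ∧
    (Submodule.Quotient.mk (Multiplicative.toAdd (x ^ j).left) : (Fin k → Rpn p n) ⧸ H)
      = j • Submodule.Quotient.mk (Multiplicative.toAdd x.left) := by
  induction j with
  | zero => simp
  | succ j ih =>
    obtain ⟨ihr, ihl⟩ := ih
    refine ⟨by rw [pow_succ, SemidirectProduct.mul_right, ihr, pow_succ], ?_⟩
    rw [pow_succ, SemidirectProduct.mul_left, toAdd_mul, Submodule.Quotient.mk_add, ihl,
      toAdd_kAct, Submodule.Quotient.mk_smul, act_trivial p n k hp H hH, succ_nsmul]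

lemma pow_mem_aux (p n k : ℕ) (hp : p.Prime) (hn : 0 < n)
    (H : Submodule (Rpn p n) (Fin k → Rpn p n))
    (hH : Nat.card ((Fin k → Rpn p n) ⧸ H) = p)
    (x : SemidirectProduct (Multiplicative (Fin k → Rpn p n)) (Gpn p n) (kAct p n k)) :
    ∃ b, Multiplicative.toAdd b ∈ H ∧ SemidirectProduct.inl b = x ^ (p ^ n) := by
  obtain ⟨hr, hl⟩ := pow_formula p n k hp H hH x (p ^ n)
  refine ⟨(x ^ p ^ n).left, ?_, ?_⟩
  · rw [← Submodule.Quotient.mk_eq_zero, hl, pn_smul_zero p n k hn H]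
  · ext
    · rfl
    · rw [SemidirectProduct.right_inl, hr, gpn_pow]


/-- The contradiction derived in the proof of Theorem 1.1: if `H` is an index-`p`
`𝔽_p[G]`-submodule of `(𝔽_p[G])^k`, then `H × {1}` is normal in `Γ = (𝔽_p[G])^k ⋊ G`,
every `pⁿ`-th power lies in `H × {1}`, the quotient has exponent dividing `pⁿ`, and in
particular the quotient is not cyclic of order `p^{n+1}`. -/
theorem quotient_by_index_p_not_cyclic (p n k : ℕ) (hp : p.Prime) (hn : 0 < n) (hk : 0 < k)
    (H : Submodule (Rpn p n) (Fin k → Rpn p n))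
    (hH : Nat.card ((Fin k → Rpn p n) ⧸ H) = p) :
    ∃ hN : (HGamma p n k H).Normal,
      (∀ x : SDP p n k, x ^ (p ^ n) ∈ HGamma p n k H) ∧
      (letI := hN;
        (∀ y : SDP p n k ⧸ HGamma p n k H, y ^ (p ^ n) = 1) ∧
        IsEmpty ((SDP p n k ⧸ HGamma p n k H) ≃* Multiplicative (ZMod (p ^ (n + 1))))) := by
  have hN : (HGamma p n k H).Normal := by
    constructor
    intro x hx γ
    obtain ⟨a, ha, rfl⟩ := hx
    obtain ⟨b, hb, he⟩ := conj_mem_aux p n k H γ a ha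
    exact Subgroup.mem_map.mpr ⟨b, hb, he⟩
  have hpow : ∀ x : SDP p n k, x ^ (p ^ n) ∈ HGamma p n k H := by
    intro x
    obtain ⟨b, hb, he⟩ := pow_mem_aux p n k hp hn H hH x
    exact Subgroup.mem_map.mpr ⟨b, hb, he⟩
  have hexp : letI := hN; ∀ y : SDP p n k ⧸ HGamma p n k H, y ^ (p ^ n) = 1 := by
    intro y
    induction y using QuotientGroup.induction_on with
    | H x =>
      rw [← QuotientGroup.mk_pow]
      exact (QuotientGroup.eq_one_iff _).mpr (hpow x)
  refine ⟨hN, hpow, hexp, ?_⟩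
  constructor
  intro e
  have h1 : (Multiplicative.ofAdd (1 : ZMod (p ^ (n + 1)))) ^ (p ^ n) = 1 := by
    have := congrArg e (hexp (e.symm (Multiplicative.ofAdd (1 : ZMod (p ^ (n + 1))))))
    rwa [map_pow, e.apply_symm_apply, show e 1 = 1 from map_one e] at this
  have h2 : ((p ^ n : ℕ) : ZMod (p ^ (n + 1))) = 0 := by
    have := congrArg Multiplicative.toAdd h1
    rw [toAdd_pow, toAdd_ofAdd, toAdd_one, nsmul_eq_mul, mul_one] at this
    exact this
  haveI : NeZero (p ^ (n + 1)) := ⟨pow_ne_zero _ hp.pos.ne'⟩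
  have h3 := (ZMod.natCast_eq_zero_iff _ _).mp h2
  rw [Nat.pow_dvd_pow_iff_le_right hp.one_lt] at h3
  omega
end

section
/- Let p be a prime and n a positive integer with n ≥ 2 when p = 2, and let k be a positive integer. Let Γ be a finite group with an abelian normal subgroup A of exponent dividing p such that Γ/A ≅ G = ℤ/p^nℤ. Regard A as an 𝔽_p[G]-module via conjugation: for g ∈ G and a ∈ A, g·a = x a x^{-1} where x ∈ Γ is any element mapping to g in Γ/A (this is well-defined since A is abelian). If A is isomorphic to (𝔽_p[G])^k as an 𝔽_p[G]-module, then Γ ≅ (𝔽_p[G])^k ⋊ G. (Group-theoretic content of Lemma 4.1: the only extension of G by a free 𝔽_p[G]-module of rank k inducing the natural module structure is the semidirect product.) -/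
noncomputable def Nelt (p n : ℕ) [NeZero (p ^ n)] : Rpn p n :=
  ∑ g : Gpn p n, MonoidAlgebra.of (ZMod p) (Gpn p n) g

lemma pow_val_eq (p n : ℕ) [NeZero (p ^ n)] (g : Gpn p n) :
    (Multiplicative.ofAdd (1 : ZMod (p ^ n))) ^ (Multiplicative.toAdd g).val = g := by
  rw [← ofAdd_nsmul]
  simp [nsmul_eq_mul, ZMod.natCast_zmod_val]

lemma fixed_eq (p n : ℕ) [NeZero (p ^ n)] (c : Rpn p n)
    (hc : MonoidAlgebra.of (ZMod p) (Gpn p n) (Multiplicative.ofAdd (1 : ZMod (p ^ n))) * c = c) :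
    Nelt p n * MonoidAlgebra.single (1 : Gpn p n) (c.coeff 1) = c := by
  have hconst : ∀ g : Gpn p n, c.coeff g = c.coeff 1 := by
    have key : ∀ v : ℕ, c.coeff (Multiplicative.ofAdd ((v : ℕ) : ZMod (p ^ n))) = c.coeff 1 := by
      intro v
      induction v with
      | zero => norm_num
      | succ v ih =>
        have h2 : ((MonoidAlgebra.of (ZMod p) (Gpn p n) (Multiplicative.ofAdd (1 : ZMod (p ^ n)))
            * c).coeff (Multiplicative.ofAdd (((v + 1 : ℕ)) : ZMod (p ^ n))))
            = c.coeff (Multiplicative.ofAdd (((v + 1 : ℕ)) : ZMod (p ^ n))) := by rw [hc]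
        rw [MonoidAlgebra.of_apply, MonoidAlgebra.single_mul_apply, one_mul] at h2
        rw [← h2]
        have : (Multiplicative.ofAdd (1 : ZMod (p ^ n)))⁻¹ *
            Multiplicative.ofAdd (((v + 1 : ℕ)) : ZMod (p ^ n)) =
            Multiplicative.ofAdd ((v : ℕ) : ZMod (p ^ n)) := by
          rw [← ofAdd_neg, ← ofAdd_add]
          push_cast
          ring_nf
        rw [this, ih]
    intro g
    have := key (Multiplicative.toAdd g).val
    rwa [ZMod.natCast_zmod_val, ofAdd_toAdd] at this
  ext g
  rw [Nelt, Finset.sum_mul]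
  simp only [MonoidAlgebra.of_apply, MonoidAlgebra.single_mul_single, mul_one, one_mul]
  rw [MonoidAlgebra.coeff_sum, Finsupp.finset_sum_apply]
  simp only [MonoidAlgebra.coeff_single, Finsupp.single_apply]
  rw [Finset.sum_ite_eq', if_pos (Finset.mem_univ g), hconst g]

lemma sum_inv_pows (p n : ℕ) [NeZero (p ^ n)] :
    (∑ j ∈ Finset.range (p ^ n),
      MonoidAlgebra.of (ZMod p) (Gpn p n) ((Multiplicative.ofAdd (1 : ZMod (p ^ n)))⁻¹ ^ j))
      = Nelt p n := by
  rw [Nelt]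
  refine Finset.sum_nbij' (fun j => Multiplicative.ofAdd (-(j : ZMod (p ^ n))))
    (fun g => (-(Multiplicative.toAdd g)).val) (fun a _ => Finset.mem_univ _)
    (fun g _ => Finset.mem_range.2 (ZMod.val_lt _)) ?_ ?_ ?_
  · intro j hj
    rw [toAdd_ofAdd, neg_neg, ZMod.val_cast_of_lt (Finset.mem_range.1 hj)]
  · intro g _
    simp [ZMod.natCast_zmod_val]
  · intro j _
    congr 1
    rw [← ofAdd_neg, ← ofAdd_nsmul]
    congr 1
    simp [nsmul_eq_mul]

/-- Group-theoretic content of Lemma 4.1: if a finite group `Γ` has an abelian normal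
subgroup `A` with `Γ/A ≅ G = ℤ/pⁿℤ` (via `ψ`), and `A`, regarded as an `𝔽_p[G]`-module
via conjugation, is isomorphic to `(𝔽_p[G])^k` (via the additive bijection `e`, which
intertwines conjugation with the `G`-action), then `Γ ≅ (𝔽_p[G])^k ⋊ G`. -/
theorem extension_by_free_module_is_semidirect (p n k : ℕ)
    (hp : p.Prime) (hn : 0 < n) (hn2 : p = 2 → 2 ≤ n) (hk : 0 < k)
    (Γ : Type*) [Group Γ] [Finite Γ] (A : Subgroup Γ) [hA : A.Normal]
    (ψ : (Γ ⧸ A) ≃* Gpn p n)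
    (e : A ≃ (Fin k → Rpn p n))
    (he_mul : ∀ a b : A, e (a * b) = e a + e b)
    (he_conj : ∀ (x : Γ) (a : A),
      e ⟨x * (a : Γ) * x⁻¹, hA.conj_mem (a : Γ) a.2 x⟩ =
        fun i => MonoidAlgebra.of (ZMod p) (Gpn p n) (ψ (QuotientGroup.mk x)) * e a i) :
    Nonempty (Γ ≃* SDP p n k) := by
  haveI : NeZero (p ^ n) := ⟨pow_ne_zero n hp.pos.ne'⟩
  have he_one : e 1 = 0 := by
    have h := he_mul 1 1
    rw [one_mul] at h
    exact (add_eq_right.mp h.symm)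
  have he_inv : ∀ a : A, e a⁻¹ = - e a := by
    intro a
    have h := he_mul a a⁻¹
    rw [mul_inv_cancel, he_one] at h
    exact eq_neg_of_add_eq_zero_right h.symm
  -- choose x above the generator
  obtain ⟨q, hq⟩ := ψ.surjective (Multiplicative.ofAdd (1 : ZMod (p ^ n)))
  obtain ⟨x, rfl⟩ := QuotientGroup.mk_surjective q
  -- x ^ (p ^ n) lies in A
  have hσpow : ∀ g : Gpn p n, g ^ (p ^ n) = 1 := by
    intro g
    rw [← ofAdd_toAdd g, ← ofAdd_nsmul]
    simp [nsmul_eq_mul, ZMod.natCast_self]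
  have hxpn : x ^ (p ^ n) ∈ A := by
    rw [← QuotientGroup.eq_one_iff]
    apply ψ.injective
    rw [map_one]
    have : (QuotientGroup.mk (x ^ (p ^ n)) : Γ ⧸ A) = (QuotientGroup.mk x) ^ (p ^ n) := rfl
    rw [this, map_pow, hq, hσpow]
  set b : A := ⟨x ^ (p ^ n), hxpn⟩ with hb
  have hbfix : ∀ i, MonoidAlgebra.of (ZMod p) (Gpn p n)
      (Multiplicative.ofAdd (1 : ZMod (p ^ n))) * e b i = e b i := by
    have h1 : (⟨x * (b : Γ) * x⁻¹, hA.conj_mem (b : Γ) b.2 x⟩ : A) = b := by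
      apply Subtype.ext
      show x * (x ^ (p ^ n)) * x⁻¹ = x ^ (p ^ n)
      group
    have h := he_conj x b
    rw [h1, hq] at h
    intro i
    conv_rhs => rw [h]
  -- choose the correcting element a
  set a : A := e.symm (fun i => MonoidAlgebra.single (1 : Gpn p n) (-((e b i).coeff 1))) with ha
  have hea : e a = fun i => MonoidAlgebra.single (1 : Gpn p n) (-((e b i).coeff 1)) :=
    e.apply_symm_apply _
  have hNa : ∀ i, Nelt p n * e a i = - e b i := by
    intro i
    rw [hea]
    have hfix' : MonoidAlgebra.of (ZMod p) (Gpn p n)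
        (Multiplicative.ofAdd (1 : ZMod (p ^ n))) * (-(e b i)) = -(e b i) := by
      rw [mul_neg, hbfix i]
    have h := fixed_eq p n (-(e b i)) hfix'
    rwa [MonoidAlgebra.coeff_neg, Finsupp.neg_apply] at h
  set y : Γ := x * (a : Γ) with hy
  have hψy : ψ (QuotientGroup.mk y) = Multiplicative.ofAdd (1 : ZMod (p ^ n)) := by
    have h1 : (QuotientGroup.mk y : Γ ⧸ A) = QuotientGroup.mk x := by
      rw [hy]
      have : (QuotientGroup.mk (x * (a : Γ)) : Γ ⧸ A)
          = QuotientGroup.mk x * QuotientGroup.mk (a : Γ) := rfl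
      rw [this, (QuotientGroup.eq_one_iff (a : Γ)).mpr a.2, mul_one]
    rw [h1, hq]
  -- key induction on powers of y
  have key : ∀ m : ℕ, ∃ c : A, y ^ m = x ^ m * (c : Γ) ∧
      e c = fun i => (∑ j ∈ Finset.range m, MonoidAlgebra.of (ZMod p) (Gpn p n)
        ((Multiplicative.ofAdd (1 : ZMod (p ^ n)))⁻¹ ^ j)) * e a i := by
    intro m
    induction m with
    | zero =>
      refine ⟨1, by simp, ?_⟩
      funext i
      simp [he_one]
    | succ m ih =>
      obtain ⟨c, hc1, hc2⟩ := ih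
      refine ⟨(⟨x⁻¹ * (c : Γ) * x⁻¹⁻¹, hA.conj_mem (c : Γ) c.2 x⁻¹⟩ : A) * a, ?_, ?_⟩
      · rw [pow_succ, hc1, Subgroup.coe_mul]
        show x ^ m * (c : Γ) * (x * (a : Γ)) = x ^ (m + 1) * ((x⁻¹ * (c : Γ) * x⁻¹⁻¹) * (a : Γ))
        rw [pow_succ]
        group
      · have hinvq : ψ (QuotientGroup.mk x⁻¹) = (Multiplicative.ofAdd (1 : ZMod (p ^ n)))⁻¹ := by
          have : (QuotientGroup.mk x⁻¹ : Γ ⧸ A) = (QuotientGroup.mk x)⁻¹ := rfl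
          rw [this, map_inv, hq]
        rw [he_mul, he_conj, hinvq, hc2]
        funext i
        simp only [Pi.add_apply]
        rw [Finset.sum_range_succ']
        simp only [pow_zero, map_one, pow_succ']
        rw [add_mul, one_mul]
        congr 1
        rw [← mul_assoc, Finset.mul_sum]
        congr 1
        refine Finset.sum_congr rfl fun j _ => ?_
        rw [map_mul]
  -- conclude y has order dividing p ^ n
  obtain ⟨c, hc1, hc2⟩ := key (p ^ n)
  have hcb : c = b⁻¹ := by
    apply e.injective
    rw [hc2, he_inv]
    funext i
    rw [sum_inv_pows p n, hNa i]
    simp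
  have hy1 : y ^ (p ^ n) = 1 := by
    rw [hc1, hcb]
    show x ^ (p ^ n) * ((b⁻¹ : A) : Γ) = 1
    rw [hb]
    simp
  -- the splitting homomorphism
  have hyord : orderOf y ∣ p ^ n := orderOf_dvd_of_pow_eq_one hy1
  have hypow : ∀ m l : ℕ, m ≡ l [MOD p ^ n] → y ^ m = y ^ l := fun m l h =>
    pow_eq_pow_iff_modEq.mpr (h.of_dvd hyord)
  set yhom : Gpn p n →* Γ :=
    { toFun := fun g => y ^ (Multiplicative.toAdd g).val
      map_one' := by
        show y ^ (Multiplicative.toAdd (1 : Gpn p n)).val = 1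
        norm_num
      map_mul' := fun g h => by
        show y ^ (Multiplicative.toAdd g + Multiplicative.toAdd h).val
          = y ^ (Multiplicative.toAdd g).val * y ^ (Multiplicative.toAdd h).val
        rw [← pow_add]
        apply hypow
        rw [ZMod.val_add]
        exact Nat.mod_modEq _ _ } with hyhom
  have hψyhom : ∀ g : Gpn p n, ψ (QuotientGroup.mk (yhom g)) = g := by
    intro g
    show ψ (QuotientGroup.mk (y ^ (Multiplicative.toAdd g).val)) = g
    have h1 : (QuotientGroup.mk (y ^ (Multiplicative.toAdd g).val) : Γ ⧸ A)
        = (QuotientGroup.mk y) ^ (Multiplicative.toAdd g).val := rfl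
    rw [h1, map_pow, hψy, pow_val_eq]
  -- homomorphism from the module part
  set ι : Multiplicative (Fin k → Rpn p n) →* Γ :=
    { toFun := fun m => ((e.symm (Multiplicative.toAdd m) : A) : Γ)
      map_one' := by
        show ((e.symm 0 : A) : Γ) = 1
        rw [← he_one, e.symm_apply_apply]
        rfl
      map_mul' := fun v w => by
        show ((e.symm (Multiplicative.toAdd v + Multiplicative.toAdd w) : A) : Γ) = _
        have h1 : e.symm (Multiplicative.toAdd v + Multiplicative.toAdd w)
            = e.symm (Multiplicative.toAdd v) * e.symm (Multiplicative.toAdd w) := by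
          apply e.injective
          rw [he_mul, e.apply_symm_apply, e.apply_symm_apply, e.apply_symm_apply]
        rw [h1]
        rfl } with hι
  -- compatibility
  have compat : ∀ g : Gpn p n,
      ι.comp (kAct p n k g).toMonoidHom = (MulAut.conj (yhom g)).toMonoidHom.comp ι := by
    intro g
    ext m
    show ι (kAct p n k g m) = yhom g * ι m * (yhom g)⁻¹
    have hc := he_conj (yhom g) (e.symm (Multiplicative.toAdd m))
    rw [hψyhom, e.apply_symm_apply] at hc
    show ((e.symm (Multiplicative.toAdd (kAct p n k g m)) : A) : Γ) = _
    have h2 : Multiplicative.toAdd (kAct p n k g m)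
        = fun i => MonoidAlgebra.of (ZMod p) (Gpn p n) g * Multiplicative.toAdd m i := rfl
    rw [h2, ← hc, e.symm_apply_apply]
    rfl
  -- assemble the isomorphism
  set φ : SemidirectProduct (Multiplicative (Fin k → Rpn p n)) (Gpn p n) (kAct p n k) →* Γ :=
    SemidirectProduct.lift ι yhom compat with hφ
  have hφ_apply : ∀ z : SemidirectProduct (Multiplicative (Fin k → Rpn p n)) (Gpn p n)
      (kAct p n k), φ z = ι z.left * yhom z.right := fun z => rfl
  have hsurj : Function.Surjective φ := by
    intro z
    have hz : z * (yhom (ψ (QuotientGroup.mk z)))⁻¹ ∈ A := by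
      rw [← QuotientGroup.eq_one_iff]
      apply ψ.injective
      have h1 : (QuotientGroup.mk (z * (yhom (ψ (QuotientGroup.mk z)))⁻¹) : Γ ⧸ A)
          = QuotientGroup.mk z * (QuotientGroup.mk (yhom (ψ (QuotientGroup.mk z))))⁻¹ := rfl
      rw [h1, map_one, map_mul, map_inv, hψyhom]
      simp
    refine ⟨⟨Multiplicative.ofAdd (e ⟨z * (yhom (ψ (QuotientGroup.mk z)))⁻¹, hz⟩),
      ψ (QuotientGroup.mk z)⟩, ?_⟩
    rw [hφ_apply]
    show ((e.symm (Multiplicative.toAdd (Multiplicative.ofAdd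
      (e ⟨z * (yhom (ψ (QuotientGroup.mk z)))⁻¹, hz⟩))) : A) : Γ) * _ = z
    rw [toAdd_ofAdd, e.symm_apply_apply]
    exact inv_mul_cancel_right z _
  have hinj : Function.Injective φ := by
    rw [injective_iff_map_eq_one]
    rintro ⟨m, g⟩ h1
    rw [hφ_apply] at h1
    have hmA : (ι m : Γ) ∈ A := (e.symm (Multiplicative.toAdd m)).2
    have hg : g = 1 := by
      have h2 : (QuotientGroup.mk (yhom g) : Γ ⧸ A) = 1 := by
        have h3 : yhom g = (ι m)⁻¹ := by
          rw [eq_comm, inv_eq_iff_mul_eq_one, h1]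
        rw [h3]
        have h4 : (QuotientGroup.mk ((ι m : Γ))⁻¹ : Γ ⧸ A) = (QuotientGroup.mk (ι m : Γ))⁻¹ := rfl
        rw [h4, (QuotientGroup.eq_one_iff (ι m : Γ)).mpr hmA]
        simp
      have h5 := hψyhom g
      rw [h2, map_one] at h5
      exact h5.symm
    subst hg
    rw [map_one, mul_one] at h1
    have hm : m = 1 := by
      have h6 : e.symm (Multiplicative.toAdd m) = (1 : A) := by
        apply Subtype.ext
        exact h1
      have h7 : Multiplicative.toAdd m = e 1 := by
        rw [← h6, e.apply_symm_apply]
      rw [he_one] at h7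
      have : m = Multiplicative.ofAdd 0 := by
        rw [← h7]
        rfl
      simpa using this
    rw [hm]
    rfl
  exact ⟨(MulEquiv.ofBijective φ ⟨hinj, hsurj⟩).symm⟩
end
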